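/- Every real 2N×2N matrix V that is symmetric, positive-definite, and symplectic (VΩVᵀ = Ω) can be written as V = K·D·Kᵀ, where K is a real 2N×2N orthogonal symplectic matrix (KᵀK = I and KΩKᵀ = Ω) and D = diag(e^{−2r₁}, e^{2r₁}, …, e^{−2r_N}, e^{2r_N}) for some r₁, …, r_N ≥ 0. -/

import Mathlib

open Matrix Module LinearMap Submodule

noncomputable section

/-- The 2N×2N symplectic form: N diagonal copies of `J = [[0,1],[-1,0]]`.
Modes are indexed by `Fin N`, each contributing two coordinates indexed by `Fin 2`. -/
def Omega (N : ℕ) : Matrix (Fin N × Fin 2) (Fin N × Fin 2) ℝ :=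
  Matrix.of fun p q => if p.1 = q.1 then !![(0 : ℝ), 1; -1, 0] p.2 q.2 else 0

/-- The covariance matrix `diag(e^{−2r₁}, e^{2r₁}, …, e^{−2r_N}, e^{2r_N})` of N independent
squeezed states with squeezing levels `r a`. -/
def VIn {N : ℕ} (r : Fin N → ℝ) : Matrix (Fin N × Fin 2) (Fin N × Fin 2) ℝ :=
  Matrix.diagonal fun p => Real.exp ((if p.2 = 0 then (-2 : ℝ) else 2) * r p.1)



section AbstractLemma

variable {E : Type*} [NormedAddCommGroup E] [InnerProductSpace ℝ E] [FiniteDimensional ℝ E]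

local notation "⟪" x ", " y "⟫" => inner (𝕜 := ℝ) x y

/-- Key induction: construct a symplectic orthonormal family of eigenvectors. -/
theorem exists_symp_family (T Om : E →ₗ[ℝ] E) (hT : T.IsSymmetric)
    (hTpos : ∀ x : E, x ≠ 0 → 0 < ⟪x, T x⟫)
    (hOmi : ∀ x y : E, ⟪Om x, Om y⟫ = ⟪x, y⟫)
    (hOms : ∀ x y : E, ⟪Om x, y⟫ = -⟪x, Om y⟫)
    (hOm2 : ∀ x : E, Om (Om x) = -x)
    (hrel : ∀ x : E, T (Om (T x)) = Om x)
    (k : ℕ) (hk : 2 * k ≤ finrank ℝ E) :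
    ∃ f : Fin k → E, (∀ a, ‖f a‖ = 1) ∧ (∀ a, ∃ μ : ℝ, 1 ≤ μ ∧ T (f a) = μ • f a) ∧
      (∀ a b, a ≠ b → ⟪f a, f b⟫ = 0) ∧ (∀ a b, ⟪f a, Om (f b)⟫ = 0) := by
  induction k with
  | zero => exact ⟨fun a => a.elim0, fun a => a.elim0, fun a => a.elim0,
      fun a => a.elim0, fun a => a.elim0⟩
  | succ k ih =>
    obtain ⟨f, hnorm, heig, horth, hsymp⟩ := ih (by omega)
    classical
    -- eigenvalue of Om∘f
    have heig' : ∀ a, ∃ μ : ℝ, 1 ≤ μ ∧ T (Om (f a)) = μ⁻¹ • Om (f a) := by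
      intro a
      obtain ⟨μ, hμ1, hμ⟩ := heig a
      refine ⟨μ, hμ1, ?_⟩
      have h := hrel (f a)
      rw [hμ, _root_.map_smul, _root_.map_smul] at h
      have hμ0 : μ ≠ 0 := by linarith
      calc T (Om (f a)) = μ⁻¹ • (μ • T (Om (f a))) := by
            rw [smul_smul, inv_mul_cancel₀ hμ0, one_smul]
        _ = μ⁻¹ • Om (f a) := by rw [h]
    set g : Fin k ⊕ Fin k → E := Sum.elim f (fun a => Om (f a)) with hg
    set W : Submodule ℝ E := span ℝ (Set.range g) with hW
    have hmemW : ∀ a, f a ∈ W ∧ Om (f a) ∈ W := by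
      intro a
      constructor
      · exact subset_span ⟨Sum.inl a, rfl⟩
      · exact subset_span ⟨Sum.inr a, rfl⟩
    have hWT : ∀ x ∈ W, T x ∈ W := by
      intro x hx
      induction hx using Submodule.span_induction with
      | mem x hx =>
        obtain ⟨c, rfl⟩ := hx
        cases c with
        | inl a =>
          obtain ⟨μ, _, hμ⟩ := heig a
          simpa [hg, hμ] using W.smul_mem μ (hmemW a).1
        | inr a =>
          obtain ⟨μ, _, hμ⟩ := heig' a
          simpa [hg, hμ] using W.smul_mem μ⁻¹ (hmemW a).2
      | zero => simp
      | add x y _ _ hx hy => simpa using W.add_mem hx hy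
      | smul c x _ hx => simpa using W.smul_mem c hx
    have hWOm : ∀ x ∈ W, Om x ∈ W := by
      intro x hx
      induction hx using Submodule.span_induction with
      | mem x hx =>
        obtain ⟨c, rfl⟩ := hx
        cases c with
        | inl a => exact (hmemW a).2
        | inr a =>
          have : Om (g (Sum.inr a)) = (-1 : ℝ) • f a := by simp [hg, hOm2]
          rw [this]; exact W.smul_mem _ (hmemW a).1
      | zero => simp
      | add x y _ _ hx hy => simpa using W.add_mem hx hy
      | smul c x _ hx => simpa using W.smul_mem c hx
    have hUT : ∀ x ∈ Wᗮ, T x ∈ Wᗮ := by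
      intro x hx
      rw [Submodule.mem_orthogonal] at hx ⊢
      intro w hw
      rw [← hT w x]
      exact hx _ (hWT w hw)
    have hUOm : ∀ x ∈ Wᗮ, Om x ∈ Wᗮ := by
      intro x hx
      rw [Submodule.mem_orthogonal] at hx ⊢
      intro w hw
      rw [real_inner_comm, hOms, real_inner_comm]
      simpa using hx _ (hWOm w hw)
    -- W has finrank ≤ 2k, so the orthogonal complement is nontrivial
    have hWrank : finrank ℝ W ≤ 2 * k := by
      have h1 := finrank_span_le_card (R := ℝ) (Set.range g)
      have h2 : (Set.range g).toFinset.card ≤ Fintype.card (Fin k ⊕ Fin k) := by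
        rw [Set.toFinset_card]; exact Fintype.card_range_le g
      simp only [Fintype.card_sum, Fintype.card_fin] at h2
      rw [hW]; omega
    have hrksum := W.finrank_add_finrank_orthogonal
    have : Nontrivial Wᗮ := nontrivial_of_finrank_pos (R := ℝ) (by omega)
    -- eigenvector of the restriction
    set S := T.restrict hUT with hS
    have hSsym : S.IsSymmetric := hT.restrict_invariant hUT
    obtain ⟨μ, hμev⟩ : ∃ μ : ℝ, Module.End.HasEigenvalue S μ :=
      ⟨_, hSsym.hasEigenvalue_iSup_of_finiteDimensional⟩
    obtain ⟨v, hv⟩ := hμev.exists_hasEigenvector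
    have hv0 : (v : E) ≠ 0 := fun h => hv.2 (Subtype.coe_injective (by simpa using h))
    have hTv : T (v : E) = μ • (v : E) := by
      have h1 := hv.1
      rw [Module.End.mem_eigenspace_iff] at h1
      have := congrArg Subtype.val h1
      simpa [hS, LinearMap.restrict_coe_apply] using this
    have hvW : (v : E) ∈ Wᗮ := v.2
    have hμpos : 0 < μ := by
      have h := hTpos (v : E) hv0
      rw [hTv, real_inner_smul_right] at h
      have h2 : (0:ℝ) < ⟪(v : E), (v : E)⟫ := by
        rw [real_inner_self_eq_norm_sq]
        have : ‖(v:E)‖ ≠ 0 := norm_ne_zero_iff.mpr hv0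
        positivity
      nlinarith
    -- normalize and flip if needed
    set y : E := ‖(v : E)‖⁻¹ • (v : E) with hy
    have hyW : y ∈ Wᗮ := Wᗮ.smul_mem _ hvW
    have hTy : T y = μ • y := by
      rw [hy, _root_.map_smul, hTv, smul_comm]
    have hynorm : ‖y‖ = 1 := by
      rw [hy, norm_smul, norm_inv, norm_norm,
        inv_mul_cancel₀ (norm_ne_zero_iff.mpr hv0)]
    have hnormOm : ∀ x : E, ‖Om x‖ = ‖x‖ := by
      intro x
      have h2 : ‖Om x‖ ^ 2 = ‖x‖ ^ 2 := by
        rw [← real_inner_self_eq_norm_sq, ← real_inner_self_eq_norm_sq, hOmi]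
      exact (sq_eq_sq₀ (norm_nonneg _) (norm_nonneg _)).mp h2
    have hTOmy : T (Om y) = μ⁻¹ • Om y := by
      have h := hrel y
      rw [hTy, _root_.map_smul, _root_.map_smul] at h
      calc T (Om y) = μ⁻¹ • (μ • T (Om y)) := by
            rw [smul_smul, inv_mul_cancel₀ (ne_of_gt hμpos), one_smul]
        _ = μ⁻¹ • Om y := by rw [h]
    obtain ⟨z, hzW, hzOmW, hznorm, μ', hμ'1, hTz⟩ :
        ∃ z : E, z ∈ Wᗮ ∧ Om z ∈ Wᗮ ∧ ‖z‖ = 1 ∧ ∃ μ' : ℝ, 1 ≤ μ' ∧ T z = μ' • z := by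
      by_cases h1 : 1 ≤ μ
      · exact ⟨y, hyW, hUOm y hyW, hynorm, μ, h1, hTy⟩
      · refine ⟨Om y, hUOm y hyW, ?_, by rw [hnormOm, hynorm], μ⁻¹, ?_, hTOmy⟩
        · rw [hOm2]; exact Wᗮ.neg_mem hyW
        · exact (one_le_inv₀ hμpos).mpr (le_of_lt (lt_of_not_ge h1))
    -- assemble
    have horthW : ∀ (u : E), u ∈ W → ∀ (x : E), x ∈ Wᗮ → ⟪u, x⟫ = 0 := by
      intro u hu x hx
      exact (Submodule.mem_orthogonal W x).mp hx u hu
    refine ⟨Fin.snoc f z, ?_, ?_, ?_, ?_⟩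
    · intro a
      refine Fin.lastCases ?_ ?_ a
      · simpa using hznorm
      · intro i; simpa using hnorm i
    · intro a
      refine Fin.lastCases ?_ ?_ a
      · exact ⟨μ', hμ'1, by simpa using hTz⟩
      · intro i
        obtain ⟨ν, hν1, hν⟩ := heig i
        exact ⟨ν, hν1, by simpa using hν⟩
    · intro a b
      refine Fin.lastCases ?_ ?_ a <;> [skip; intro i] <;> refine Fin.lastCases ?_ ?_ b
      · intro hab
        exact absurd rfl hab
      · intro j hab
        simp only [Fin.snoc_last, Fin.snoc_castSucc]
        rw [real_inner_comm]
        exact horthW _ (hmemW j).1 _ hzW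
      · intro hab
        simp only [Fin.snoc_last, Fin.snoc_castSucc]
        exact horthW _ (hmemW i).1 _ hzW
      · intro j hab
        simp only [Fin.snoc_castSucc]
        exact horth i j (by simpa using hab)
    · intro a b
      refine Fin.lastCases ?_ ?_ a <;> [skip; intro i] <;> refine Fin.lastCases ?_ ?_ b
      · simp only [Fin.snoc_last]
        have h1 := hOms z z
        have h2 : ⟪Om z, z⟫ = ⟪z, Om z⟫ := real_inner_comm _ _
        linarith
      · intro j
        simp only [Fin.snoc_last, Fin.snoc_castSucc]
        rw [real_inner_comm]
        exact horthW _ (hmemW j).2 _ hzW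
      · simp only [Fin.snoc_last, Fin.snoc_castSucc]
        exact horthW _ (hmemW i).1 _ hzOmW
      · intro j
        simp only [Fin.snoc_castSucc]
        exact hsymp i j

end AbstractLemma

abbrev E16 (N : ℕ) := EuclideanSpace ℝ (Fin N × Fin 2)

variable {N : ℕ}

lemma omega_transpose : (Omega N)ᵀ = -(Omega N) := by
  ext ⟨a, i⟩ ⟨b, j⟩
  simp only [Matrix.transpose_apply, Omega, Matrix.of_apply, Matrix.neg_apply]
  rcases eq_or_ne a b with h | h
  · subst h
    simp only [if_pos rfl]
    fin_cases i <;> fin_cases j <;> norm_num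
  · simp [h, Ne.symm h]

lemma omega_mul_omega : Omega N * Omega N = -1 := by
  ext ⟨a, i⟩ ⟨b, j⟩
  simp only [Matrix.mul_apply, Fintype.sum_prod_type, Omega, Matrix.of_apply]
  rw [Finset.sum_eq_single a]
  · rcases eq_or_ne a b with h | h
    · subst h
      simp only [if_pos rfl]
      fin_cases i <;> fin_cases j <;>
        simp [Fin.sum_univ_two, Matrix.one_apply, Prod.ext_iff]
    · simp [h, Matrix.one_apply, Prod.ext_iff, h]
  · intro c _ hc
    simp [Ne.symm hc]
  · simp

lemma omega_orth : (Omega N)ᵀ * Omega N = 1 := by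
  rw [omega_transpose, Matrix.neg_mul, omega_mul_omega, neg_neg]


/-- Euler/Bloch–Messiah for pure Gaussian covariance matrices: every real
symmetric, positive-definite, symplectic (`VΩVᵀ = Ω`) 2N×2N matrix `V` can be written as
`V = K·D·Kᵀ` with `K` orthogonal symplectic and
`D = diag(e^{−2r₁}, e^{2r₁}, …, e^{−2r_N}, e^{2r_N})` for some `r₁, …, r_N ≥ 0`. -/
theorem stmt_16 (N : ℕ) (V : Matrix (Fin N × Fin 2) (Fin N × Fin 2) ℝ)
    (hsymm : V.IsSymm) (hpos : V.PosDef)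
    (hsymp : V * Omega N * Vᵀ = Omega N) :
    ∃ (K : Matrix (Fin N × Fin 2) (Fin N × Fin 2) ℝ) (r : Fin N → ℝ),
      Kᵀ * K = 1 ∧ K * Omega N * Kᵀ = Omega N ∧ (∀ a, 0 ≤ r a) ∧
        V = K * VIn r * Kᵀ := by
  classical
  set eqv := WithLp.equiv 2 ((Fin N × Fin 2) → ℝ) with heqv
  have hVOV : V * Omega N * V = Omega N := by rwa [hsymm.eq] at hsymp
  set T : E16 N →ₗ[ℝ] E16 N := Matrix.toEuclideanLin V with hT
  set Om : E16 N →ₗ[ℝ] E16 N := Matrix.toEuclideanLin (Omega N) with hOm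
  have hinner : ∀ x y : E16 N, (inner ℝ x y : ℝ) = eqv x ⬝ᵥ eqv y := by
    intro x y
    rw [EuclideanSpace.inner_eq_star_dotProduct]
    simp [heqv, dotProduct_comm]
  have hTapp : ∀ x : E16 N, eqv (T x) = V *ᵥ eqv x := fun x => rfl
  have hOmapp : ∀ x : E16 N, eqv (Om x) = Omega N *ᵥ eqv x := fun x => rfl
  have dmv : ∀ (M : Matrix (Fin N × Fin 2) (Fin N × Fin 2) ℝ)
      (x y : (Fin N × Fin 2) → ℝ), (M *ᵥ x) ⬝ᵥ y = x ⬝ᵥ (Mᵀ *ᵥ y) := by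
    intro M x y
    rw [Matrix.dotProduct_mulVec, Matrix.vecMul_transpose]
  have hTsym : T.IsSymmetric := by
    rw [hT, ← Matrix.isHermitian_iff_isSymmetric]
    exact hpos.1
  have hTpos : ∀ x : E16 N, x ≠ 0 → (0:ℝ) < inner ℝ x (T x) := by
    intro x hx
    rw [hinner, hTapp]
    have := hpos.dotProduct_mulVec_pos (x := eqv x) (fun h => hx (by simpa [heqv] using h))
    simpa using this
  have hOmi : ∀ x y : E16 N, (inner ℝ (Om x) (Om y) : ℝ) = inner ℝ x y := by
    intro x y
    rw [hinner, hinner, hOmapp, hOmapp, dmv, Matrix.mulVec_mulVec, omega_orth,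
      Matrix.one_mulVec]
  have hOms : ∀ x y : E16 N, (inner ℝ (Om x) y : ℝ) = -(inner ℝ x (Om y) : ℝ) := by
    intro x y
    rw [hinner, hinner, hOmapp, hOmapp, dmv, omega_transpose, Matrix.neg_mulVec,
      dotProduct_neg]
  have hOm2 : ∀ x : E16 N, Om (Om x) = -x := by
    intro x
    apply eqv.injective
    rw [hOmapp, hOmapp, Matrix.mulVec_mulVec, omega_mul_omega, Matrix.neg_mulVec,
      Matrix.one_mulVec]
    rfl
  have hrel : ∀ x : E16 N, T (Om (T x)) = Om x := by
    intro x
    apply eqv.injective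
    rw [hTapp, hOmapp, hTapp, hOmapp, Matrix.mulVec_mulVec, Matrix.mulVec_mulVec, hVOV]
  have hrank : 2 * N ≤ finrank ℝ (E16 N) := by
    rw [finrank_euclideanSpace]
    simp [Nat.mul_comm]
  obtain ⟨f, hnorm, heig, horth, hsympf⟩ :=
    exists_symp_family T Om hTsym hTpos hOmi hOms hOm2 hrel N hrank
  choose μ hμ1 hμeig using heig
  have hμpos : ∀ a, (0:ℝ) < μ a := fun a => lt_of_lt_of_le one_pos (hμ1 a)
  set fv : Fin N → ((Fin N × Fin 2) → ℝ) := fun a => eqv (f a) with hfv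
  have fdot : ∀ a b, fv a ⬝ᵥ fv b = if a = b then (1:ℝ) else 0 := by
    intro a b
    rcases eq_or_ne a b with h | h
    · subst h
      rw [if_pos rfl, ← hinner, real_inner_self_eq_norm_sq, hnorm, one_pow]
    · rw [if_neg h, ← hinner]
      exact horth a b h
  have fsdot : ∀ a b, fv a ⬝ᵥ (Omega N *ᵥ fv b) = 0 := by
    intro a b
    have h := hsympf a b
    rwa [hinner, hOmapp] at h
  have feig : ∀ a, V *ᵥ fv a = μ a • fv a := by
    intro a
    have h := congrArg eqv (hμeig a)
    rwa [hTapp] at h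
  have feig' : ∀ a, V *ᵥ (Omega N *ᵥ fv a) = (μ a)⁻¹ • (Omega N *ᵥ fv a) := by
    intro a
    have h : V *ᵥ (Omega N *ᵥ (V *ᵥ fv a)) = Omega N *ᵥ fv a := by
      rw [Matrix.mulVec_mulVec, Matrix.mulVec_mulVec, hVOV]
    rw [feig, Matrix.mulVec_smul, Matrix.mulVec_smul] at h
    calc V *ᵥ (Omega N *ᵥ fv a) = (μ a)⁻¹ • (μ a • (V *ᵥ (Omega N *ᵥ fv a))) := by
          rw [smul_smul, inv_mul_cancel₀ (ne_of_gt (hμpos a)), one_smul]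
      _ = (μ a)⁻¹ • (Omega N *ᵥ fv a) := by rw [h]
  -- dot product identities
  have dOm : ∀ x y : (Fin N × Fin 2) → ℝ,
      (Omega N *ᵥ x) ⬝ᵥ (Omega N *ᵥ y) = x ⬝ᵥ y := by
    intro x y
    rw [dmv, Matrix.mulVec_mulVec, omega_orth, Matrix.one_mulVec]
  have dSkew : ∀ x y : (Fin N × Fin 2) → ℝ,
      (Omega N *ᵥ x) ⬝ᵥ y = -(x ⬝ᵥ (Omega N *ᵥ y)) := by
    intro x y
    rw [dmv, omega_transpose, Matrix.neg_mulVec, dotProduct_neg]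
  have dOm2 : ∀ x : (Fin N × Fin 2) → ℝ, Omega N *ᵥ (Omega N *ᵥ x) = -x := by
    intro x
    rw [Matrix.mulVec_mulVec, omega_mul_omega, Matrix.neg_mulVec, Matrix.one_mulVec]
  have fdot' : ∀ a b : Fin N, (Omega N *ᵥ fv a) ⬝ᵥ fv b = 0 := by
    intro a b
    rw [dSkew, fsdot, neg_zero]
  -- the columns of K
  set g : (Fin N × Fin 2) → ((Fin N × Fin 2) → ℝ) :=
    fun q => if q.2 = 0 then Omega N *ᵥ fv q.1 else fv q.1 with hg
  set K : Matrix (Fin N × Fin 2) (Fin N × Fin 2) ℝ := Matrix.of fun p q => g q p with hK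
  set r : Fin N → ℝ := fun a => Real.log (μ a) / 2 with hr
  have hexp2 : ∀ a, Real.exp (2 * r a) = μ a := by
    intro a
    rw [hr]
    have : 2 * (Real.log (μ a) / 2) = Real.log (μ a) := by ring
    rw [this, Real.exp_log (hμpos a)]
  have hexpneg2 : ∀ a, Real.exp (-2 * r a) = (μ a)⁻¹ := by
    intro a
    have : (-2 : ℝ) * r a = -(2 * r a) := by ring
    rw [this, Real.exp_neg, hexp2]
  have gdot : ∀ p q : (Fin N × Fin 2), g p ⬝ᵥ g q = if p = q then (1:ℝ) else 0 := by
    rintro ⟨a, i⟩ ⟨b, j⟩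
    fin_cases i <;> fin_cases j
    · show (Omega N *ᵥ fv a) ⬝ᵥ (Omega N *ᵥ fv b) = _
      rw [dOm, fdot]
      simp [Prod.ext_iff]
    · show (Omega N *ᵥ fv a) ⬝ᵥ fv b = _
      rw [fdot']
      simp [Prod.ext_iff]
    · show fv a ⬝ᵥ (Omega N *ᵥ fv b) = _
      rw [fsdot]
      simp [Prod.ext_iff]
    · show fv a ⬝ᵥ fv b = _
      rw [fdot]
      simp [Prod.ext_iff]
  have gOmdot : ∀ p q : (Fin N × Fin 2),
      g p ⬝ᵥ (Omega N *ᵥ g q) = Omega N p q := by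
    rintro ⟨a, i⟩ ⟨b, j⟩
    fin_cases i <;> fin_cases j
    · show (Omega N *ᵥ fv a) ⬝ᵥ (Omega N *ᵥ (Omega N *ᵥ fv b)) = _
      rw [dOm, fsdot]
      simp [Omega]
    · show (Omega N *ᵥ fv a) ⬝ᵥ (Omega N *ᵥ fv b) = _
      rw [dOm, fdot]
      rcases eq_or_ne a b with h | h <;> simp [Omega, h]
    · show fv a ⬝ᵥ (Omega N *ᵥ (Omega N *ᵥ fv b)) = _
      rw [dOm2, dotProduct_neg, fdot]
      rcases eq_or_ne a b with h | h <;> simp [Omega, h]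
    · show fv a ⬝ᵥ (Omega N *ᵥ fv b) = _
      rw [fsdot]
      simp [Omega]
  have gVdot : ∀ p q : (Fin N × Fin 2),
      g p ⬝ᵥ (V *ᵥ g q) = VIn r p q := by
    rintro ⟨a, i⟩ ⟨b, j⟩
    have hVg : ∀ q : Fin N × Fin 2,
        V *ᵥ g q = (if q.2 = 0 then (μ q.1)⁻¹ else μ q.1) • g q := by
      rintro ⟨b, j⟩
      fin_cases j
      · show V *ᵥ (Omega N *ᵥ fv b) = _
        rw [feig' b]
        rfl
      · show V *ᵥ fv b = _
        rw [feig b]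
        rfl
    rw [hVg, dotProduct_smul, gdot, VIn, Matrix.diagonal_apply]
    rcases eq_or_ne (⟨a, i⟩ : Fin N × Fin 2) ⟨b, j⟩ with h | h
    · rw [if_pos h, if_pos h]
      obtain ⟨h1, h2⟩ := Prod.mk.injEq .. ▸ h
      subst h1
      fin_cases i <;> fin_cases j <;> simp_all [hexp2, hexpneg2, smul_eq_mul]
    · rw [if_neg h, if_neg h, smul_eq_mul, mul_zero]
  -- assemble the matrix identities
  have hcol : ∀ (p : Fin N × Fin 2), (fun c => K c p) = g p := by
    intro p
    rfl
  have hKtK : Kᵀ * K = 1 := by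
    ext p q
    rw [Matrix.mul_apply, Matrix.one_apply]
    calc ∑ c, Kᵀ p c * K c q = g p ⬝ᵥ g q := by
          simp [Matrix.transpose_apply, hK, dotProduct]
      _ = _ := by rw [gdot]
  have hKKt : K * Kᵀ = 1 := mul_eq_one_comm.mp hKtK
  have hKtMK : ∀ (M : Matrix (Fin N × Fin 2) (Fin N × Fin 2) ℝ) (p q),
      (Kᵀ * M * K) p q = g p ⬝ᵥ (M *ᵥ g q) := by
    intro M p q
    rw [Matrix.mul_assoc, Matrix.mul_apply]
    simp only [Matrix.transpose_apply, Matrix.mul_apply, dotProduct,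
      Matrix.mulVec, hK, Matrix.of_apply]
  have hKtOK : Kᵀ * Omega N * K = Omega N := by
    ext p q
    rw [hKtMK, gOmdot]
  have hKtVK : Kᵀ * V * K = VIn r := by
    ext p q
    rw [hKtMK, gVdot]
  refine ⟨K, r, hKtK, ?_, ?_, ?_⟩
  · calc K * Omega N * Kᵀ = K * (Kᵀ * Omega N * K) * Kᵀ := by rw [hKtOK]
      _ = (K * Kᵀ) * Omega N * (K * Kᵀ) := by
          simp only [Matrix.mul_assoc]
      _ = Omega N := by rw [hKKt, Matrix.one_mul, Matrix.mul_one]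
  · intro a
    rw [hr]
    have := Real.log_nonneg (hμ1 a)
    linarith
  · calc V = (K * Kᵀ) * V * (K * Kᵀ) := by rw [hKKt, Matrix.one_mul, Matrix.mul_one]
      _ = K * (Kᵀ * V * K) * Kᵀ := by simp only [Matrix.mul_assoc]
      _ = K * VIn r * Kᵀ := by rw [hKtVK]
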